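/- Let A be a sequence of n real numbers and define its interval partition: A = I_0 ++ I_1 ++ ... ++ I_{λ-1}, with interval I_i = A[α_i..β_i], determined by the conditions that for each interval and index j in [α_i, β_i], if j ≠ β_i then MS(A,j) ≥ 0, and if j = β_i and i < λ-1 then MS(A,j) < 0, where MS(A,j) = max over h ≤ j of sum of A[h..j]. Then for every interval I_i and every j ∈ [α_i, β_i], MS(A,j) = sum of A[α_i..j]; and if i ≠ λ-1, then the sum of A[j..β_i] is negative. -/

import Mathlib

noncomputable section

/-- Sum of the contiguous subsequence A[j..i]. -/
def seg (A : ℕ → ℝ) (j i : ℕ) : ℝ := ∑ t ∈ Finset.Icc j i, A t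

/-- Maximal sum at element i: max over j ≤ i of sum A[j..i]. -/
def MS (A : ℕ → ℝ) (i : ℕ) : ℝ :=
  (Finset.range (i+1)).sup' (Finset.nonempty_range_iff.mpr (Nat.succ_ne_zero i))
    (fun j => seg A j i)

/-- Maximal sum of a contiguous, possibly empty, subsequence of A[0..n-1]. -/
def maxsum (A : ℕ → ℝ) (n : ℕ) : ℝ :=
  Finset.fold max 0 (fun q => seg A q.1 q.2)
    (Finset.filter (fun q => q.1 ≤ q.2) ((Finset.range n) ×ˢ (Finset.range n)))

/-- Insertion of x between A[p-1] and A[p]. -/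
def ins (A : ℕ → ℝ) (p : ℕ) (x : ℝ) : ℕ → ℝ :=
  fun i => if i < p then A i else if i = p then x else A (i - 1)

/-- Sum of the circular subsequence A⟨j..i⟩ of a sequence of length n. -/
def circseg (A : ℕ → ℝ) (n j i : ℕ) : ℝ :=
  if j ≤ i then seg A j i else seg A j (n-1) + seg A 0 i

/-- Maximal circular sum at element i. -/
def MCS (A : ℕ → ℝ) (n i : ℕ) : ℝ :=
  if h : 0 < n then
    (Finset.range n).sup' (Finset.nonempty_range_iff.mpr h.ne')
      (fun j => circseg A n j i)
  else 0

/-- Maximal circular sum of a possibly empty circular subsequence. -/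
def mcs (A : ℕ → ℝ) (n : ℕ) : ℝ :=
  Finset.fold max 0 (fun q => circseg A n q.1 q.2)
    ((Finset.range n) ×ˢ (Finset.range n))

/-- OMCS A n i = i ⊖ j*, where j* is the largest j with sum A⟨(i⊖j)..i⟩ = MCS A n i. -/
def OMCS (A : ℕ → ℝ) (n i : ℕ) : ℕ :=
  (i + n - ((Finset.filter
      (fun j => circseg A n ((i + n - j) % n) i = MCS A n i)
      (Finset.range n)).max.getD 0)) % n

/-- h belongs to the circular range from a to b (indices mod n). -/
def inCircRange (n a b h : ℕ) : Prop :=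
  (a ≤ b ∧ a ≤ h ∧ h ≤ b) ∨ (b < a ∧ ((a ≤ h ∧ h < n) ∨ h ≤ b))

/-- The (noncircular) interval partition of A into L intervals A[α i .. β i]. -/
def IntervalPartition (A : ℕ → ℝ) (n L : ℕ) (α β : ℕ → ℕ) : Prop :=
  0 < L ∧ 0 < n ∧ α 0 = 0 ∧ β (L-1) = n-1 ∧
  (∀ i, i + 1 < L → α (i+1) = β i + 1) ∧
  (∀ i, i < L → α i ≤ β i) ∧
  (∀ i, i < L → ∀ j, α i ≤ j → j ≤ β i →
     (j ≠ β i → 0 ≤ MS A j) ∧ (j = β i → i < L - 1 → MS A j < 0))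

lemma seg_self (A : ℕ → ℝ) (j : ℕ) : seg A j j = A j := by
  simp [seg]

lemma seg_succ (A : ℕ → ℝ) (h k : ℕ) (hh : h ≤ k + 1) :
    seg A h (k+1) = seg A h k + A (k+1) := by
  unfold seg
  rw [← Finset.sum_Icc_succ_top hh]

lemma le_MS (A : ℕ → ℝ) {h i : ℕ} (hh : h ≤ i) : seg A h i ≤ MS A i := by
  unfold MS
  exact Finset.le_sup' (fun j => seg A j i) (Finset.mem_range.mpr (Nat.lt_succ_of_le hh))

lemma MS_zero (A : ℕ → ℝ) : MS A 0 = A 0 := by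
  simp [MS, seg_self]

lemma MS_succ (A : ℕ → ℝ) (k : ℕ) :
    MS A (k+1) = max (MS A k) 0 + A (k+1) := by
  apply le_antisymm
  · unfold MS
    apply Finset.sup'_le
    intro h hh
    have hh' : h ≤ k + 1 := Nat.lt_succ_iff.mp (Finset.mem_range.mp hh)
    rw [seg_succ A h k hh']
    refine add_le_add ?_ le_rfl
    rcases Nat.lt_or_ge h (k+1) with hlt | hge
    · exact le_trans (le_MS A (Nat.lt_succ_iff.mp hlt)) (le_max_left _ _)
    · have : h = k + 1 := le_antisymm hh' hge
      subst this
      have : seg A (k+1) k = 0 := by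
        simp [seg, Finset.Icc_eq_empty_of_lt (Nat.lt_succ_self k)]
      rw [this]; exact le_max_right _ _
  · rcases le_or_gt (MS A k) 0 with hle | hlt
    · rw [max_eq_right hle]
      calc 0 + A (k+1) = seg A (k+1) (k+1) := by rw [seg_self]; ring
        _ ≤ MS A (k+1) := le_MS A le_rfl
    · rw [max_eq_left hlt.le]
      obtain ⟨h₀, hh₀, heq⟩ := Finset.exists_mem_eq_sup'
        (Finset.nonempty_range_iff.mpr (Nat.succ_ne_zero k)) (fun j => seg A j k)
      have hh₀' : h₀ ≤ k := Nat.lt_succ_iff.mp (Finset.mem_range.mp hh₀)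
      have : MS A k + A (k+1) = seg A h₀ (k+1) := by
        rw [seg_succ A h₀ k (by omega), MS, heq]
      rw [this]
      exact le_MS A (by omega)

theorem stmt5 (A : ℕ → ℝ) (n L : ℕ) (α β : ℕ → ℕ)
    (hip : IntervalPartition A n L α β) :
    ∀ i, i < L → ∀ j, α i ≤ j → j ≤ β i →
      MS A j = seg A (α i) j ∧ (i ≠ L - 1 → seg A j (β i) < 0) := by
  obtain ⟨hL, hn, hα0, hβn, hsucc, hαβ, hcond⟩ := hip
  have key : ∀ j, ∀ i, i < L → α i ≤ j → j ≤ β i → MS A j = seg A (α i) j := by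
    intro j
    induction j with
    | zero =>
      intro i _ hαj _
      have : α i = 0 := Nat.le_zero.mp hαj
      rw [this, seg_self, MS_zero]
    | succ k ih =>
      intro i hi hαj hjβ
      rcases Nat.lt_or_ge k (α i) with hlt | hge
      · -- α i = k+1, start of interval
        have hαeq : α i = k + 1 := le_antisymm hαj hlt
        have hi1 : 1 ≤ i := by
          rcases Nat.eq_zero_or_pos i with h0 | h1
          · subst h0; omega
          · exact h1
        obtain ⟨i', rfl⟩ : ∃ i', i = i' + 1 := ⟨i - 1, by omega⟩
        have hk : k = β i' := by have := hsucc i' hi; omega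
        have hMSneg : MS A k < 0 := by
          have := (hcond i' (by omega) (β i') (hαβ i' (by omega)) le_rfl).2 rfl (by omega)
          rwa [hk]
        rw [MS_succ, hαeq, seg_self, max_eq_right hMSneg.le, zero_add]
      · -- α i ≤ k, interior
        have hk : k ≠ β i := by omega
        have h0 : 0 ≤ MS A k := (hcond i hi k hge (by omega)).1 hk
        have ihk := ih i hi hge (by omega)
        rw [MS_succ, max_eq_left h0, ihk, seg_succ A _ k (by omega)]
  intro i hi j hαj hjβ
  refine ⟨key j i hi hαj hjβ, fun hne => ?_⟩
  have hMS : MS A (β i) < 0 :=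
    (hcond i hi (β i) (hαβ i hi) le_rfl).2 rfl (by omega)
  exact lt_of_le_of_lt (le_MS A hjβ) hMS
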